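/- Let p be an odd prime not dividing s−2, where s > 3, and let n be a natural number. Then the set of residues {P_s(i) mod p : 1 ≤ i ≤ p} has exactly (p+1)/2 elements, where P_s(m) = ((s−2)m² − (s−4)m)/2. -/

import Mathlib

def polygonal (s m : ℕ) : ℕ := ((s - 2) * m ^ 2 - (s - 4) * m) / 2

open Finset

lemma two_ne_zero_zmod (p : ℕ) (hp : p.Prime) (hodd : Odd p) : (2 : ZMod p) ≠ 0 := by
  have h : ¬ p ∣ 2 := by
    intro h
    have := (Nat.prime_dvd_prime_iff_eq hp Nat.prime_two).mp h
    subst this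
    simp [Nat.odd_iff] at hodd
  have : ((2 : ℕ) : ZMod p) ≠ 0 := by
    rw [Ne, ZMod.natCast_eq_zero_iff]
    exact h
  simpa using this

lemma sq_image_card (p : ℕ) [NeZero p] (hp : p.Prime) (hodd : Odd p) :
    (Finset.univ.image (fun x : ZMod p => x ^ 2)).card = (p + 1) / 2 := by
  haveI : Fact p.Prime := ⟨hp⟩
  have h2 : (2 : ZMod p) ≠ 0 := two_ne_zero_zmod p hp hodd
  set S := Finset.univ.image (fun x : ZMod p => x ^ 2) with hS
  have h0 : (0 : ZMod p) ∈ S := mem_image.mpr ⟨0, mem_univ _, by ring⟩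
  have hfib : ∀ a ∈ S, (Finset.univ.filter (fun x : ZMod p => x ^ 2 = a)).card
      = if a = 0 then 1 else 2 := by
    intro a ha
    obtain ⟨y, -, hy⟩ := mem_image.mp ha
    by_cases h : a = 0
    · subst h
      rw [if_pos rfl]
      have : (Finset.univ.filter (fun x : ZMod p => x ^ 2 = 0)) = {0} := by
        ext x; simp [pow_eq_zero_iff]
      rw [this, card_singleton]
    · rw [if_neg h]
      have hy0 : y ≠ 0 := by rintro rfl; exact h (by rw [← hy]; ring)
      have : (Finset.univ.filter (fun x : ZMod p => x ^ 2 = a)) = {y, -y} := by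
        ext x
        simp only [mem_filter, mem_univ, true_and, mem_insert, mem_singleton, ← hy]
        exact sq_eq_sq_iff_eq_or_eq_neg
      rw [this, card_insert_of_notMem, card_singleton]
      simp only [mem_singleton]
      intro hxy
      apply hy0
      have h2y : (2 : ZMod p) * y = 0 := by rw [two_mul]; nth_rewrite 1 [hxy]; ring
      rcases mul_eq_zero.mp h2y with h' | h'
      · exact absurd h' h2
      · exact h'
  have hcard := Finset.card_eq_sum_card_image (fun x : ZMod p => x ^ 2) Finset.univ
  rw [Finset.sum_congr rfl hfib] at hcard
  rw [← Finset.insert_erase h0, Finset.sum_insert (notMem_erase _ _), if_pos rfl] at hcard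
  have hsum : ∑ a ∈ S.erase 0, (if a = 0 then 1 else 2) = 2 * (S.card - 1) := by
    rw [Finset.sum_congr rfl (fun a ha => if_neg (ne_of_mem_erase ha)),
      Finset.sum_const, Finset.card_erase_of_mem h0, smul_eq_mul, mul_comm]
  rw [hsum] at hcard
  have hcardS : 1 ≤ S.card := Finset.card_pos.mpr ⟨0, h0⟩
  have hu : (Finset.univ : Finset (ZMod p)).card = p := by
    rw [Finset.card_univ, ZMod.card]
  rw [hu] at hcard
  omega

theorem stmt_5 (p : ℕ) (hp : p.Prime) (hodd : Odd p) (s : ℕ) (hs : 3 < s)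
    (hps : ¬ p ∣ (s - 2)) (n : ℕ) :
    ((Finset.Icc 1 p).image (fun i => polygonal s i % p)).card = (p + 1) / 2 := by
  haveI : Fact p.Prime := ⟨hp⟩
  have h2 : (2 : ZMod p) ≠ 0 := two_ne_zero_zmod p hp hodd
  have ha : ((s : ZMod p) - 2) ≠ 0 := by
    intro h
    apply hps
    have : ((s - 2 : ℕ) : ZMod p) = 0 := by
      rw [Nat.cast_sub (by omega)]
      push_cast
      exact h
    exact (ZMod.natCast_eq_zero_iff _ _).mp this
  set F : ZMod p → ZMod p :=
    fun x => (2 : ZMod p)⁻¹ * (((s : ZMod p) - 2) * x ^ 2 - ((s : ZMod p) - 4) * x) with hF_def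
  -- polygonal casts to F
  have hcast : ∀ i : ℕ, ((polygonal s i : ℕ) : ZMod p) = F (i : ZMod p) := by
    intro i
    obtain ⟨k, hk⟩ : ∃ k, i ^ 2 = i + 2 * k := by
      have h1 : i ≤ i ^ 2 := Nat.le_self_pow two_ne_zero i
      have h2' : 2 ∣ i ^ 2 + i := by
        have := Nat.even_mul_succ_self i
        rw [show i * (i + 1) = i ^ 2 + i by ring] at this
        exact this.two_dvd
      obtain ⟨m, hm⟩ : ∃ m, i ^ 2 = m := ⟨_, rfl⟩
      rw [hm] at h1 h2' ⊢
      exact ⟨(m - i) / 2, by omega⟩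
    have key : (s - 2) * i ^ 2 - (s - 4) * i = 2 * ((s - 2) * k + i) := by
      apply Nat.sub_eq_of_eq_add
      rw [hk, show s - 2 = (s - 4) + 2 by omega]
      ring
    have hpoly : polygonal s i = (s - 2) * k + i := by
      unfold polygonal
      rw [key, Nat.mul_div_cancel_left _ two_pos]
    have hkc : ((i : ZMod p)) ^ 2 = (i : ZMod p) + 2 * (k : ZMod p) := by
      exact_mod_cast congrArg (Nat.cast : ℕ → ZMod p) hk
    rw [hpoly, hF_def]
    push_cast [Nat.cast_sub (show 2 ≤ s by omega)]
    field_simp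
    linear_combination (-((s : ZMod p) - 2)) * hkc
  -- image of cast over Icc 1 p is univ
  have hIcc : (Finset.Icc 1 p).image (Nat.cast : ℕ → ZMod p) = Finset.univ := by
    apply Finset.eq_univ_of_forall
    intro r
    rw [mem_image]
    by_cases hr : r = 0
    · exact ⟨p, mem_Icc.mpr ⟨hp.pos, le_refl p⟩, by simp [hr]⟩
    · refine ⟨r.val, ?_, ZMod.natCast_rightInverse r⟩
      rw [mem_Icc]
      exact ⟨Nat.one_le_iff_ne_zero.mpr (fun h => hr (by rwa [← ZMod.val_eq_zero])),
        (ZMod.val_lt r).le⟩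
  -- reduce to counting image of F
  have key : (Finset.Icc 1 p).image (fun i => polygonal s i % p)
      = (Finset.univ.image F).image ZMod.val := by
    rw [← hIcc, Finset.image_image, Finset.image_image]
    apply Finset.image_congr
    intro i _
    simp only [Function.comp_apply]
    rw [← hcast i, ZMod.val_natCast]
  rw [key, Finset.card_image_of_injective _ (ZMod.val_injective p)]
  -- complete the square
  set c : ZMod p := (2 : ZMod p)⁻¹ * ((s : ZMod p) - 2) with hc_def
  have hc : c ≠ 0 := mul_ne_zero (inv_ne_zero h2) ha
  set d : ZMod p := ((s : ZMod p) - 4) * (2 * ((s : ZMod p) - 2))⁻¹ with hd_def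
  have hFd : ∀ x : ZMod p, F (x + d) = c * x ^ 2 + F d := by
    intro x
    have h2a : (2 : ZMod p) * ((s : ZMod p) - 2) ≠ 0 := mul_ne_zero h2 ha
    rw [hF_def, hc_def, hd_def]
    simp only
    field_simp [h2, ha, h2a]
    ring
  have hsurj : Finset.univ.image (fun x : ZMod p => x + d) = Finset.univ :=
    Finset.image_univ_of_surjective (fun y => ⟨y - d, by ring⟩)
  have himg : Finset.univ.image F
      = (Finset.univ.image (fun x : ZMod p => x ^ 2)).image (fun y => c * y + F d) := by
    calc Finset.univ.image F
        = ((Finset.univ.image (fun x : ZMod p => x + d)).image F) := by rw [hsurj]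
      _ = Finset.univ.image (fun x : ZMod p => F (x + d)) := Finset.image_image
      _ = Finset.univ.image (fun x : ZMod p => c * x ^ 2 + F d) :=
          Finset.image_congr (fun x _ => hFd x)
      _ = (Finset.univ.image (fun x : ZMod p => x ^ 2)).image (fun y => c * y + F d) := by
          rw [Finset.image_image]; rfl
  rw [himg, Finset.card_image_of_injective]
  · exact sq_image_card p hp hodd
  · intro x y hxy
    simp only at hxy
    have : c * x = c * y := by linear_combination hxy
    exact mul_left_cancel₀ hc this
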